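/- Let σ ∈ S_k with k ≥ 3, and let σ̂ be σ with its first two entries swapped. If σ̂ contains 231 as a classical pattern, then Sort(SC_σ) equals the set of permutations that avoid 132 classically and avoid rev(σ) consecutively. -/

import Mathlib

open List Finset

attribute [local instance] Classical.propDecidable

/-- Two lists (with distinct entries) have the same relative order. -/
def SameRel (u v : List ℕ) : Prop :=
  u.length = v.length ∧ ∀ i j, i < j → j < u.length →
    (u.getD i 0 < u.getD j 0 ↔ v.getD i 0 < v.getD j 0)

/-- `l` contains `σ` as a classical pattern. -/
def ContainsPat (l σ : List ℕ) : Prop := ∃ u, u.Sublist l ∧ SameRel u σ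

/-- `l` contains `σ` as a consecutive pattern. -/
def ContainsC (l σ : List ℕ) : Prop := ∃ u, u.IsInfix l ∧ SameRel u σ

/-- `l` avoids `σ` as a classical pattern. -/
def AvoidsPat (l σ : List ℕ) : Prop := ¬ ContainsPat l σ

/-- `l` avoids `σ` as a consecutive pattern. -/
def AvoidsC (l σ : List ℕ) : Prop := ¬ ContainsC l σ

/-- Generic right-greedy stack-sorting: push the next entry unless doing so creates a
`bad` stack (read top to bottom); otherwise pop the top of the stack to the output. -/
noncomputable def stackAux (bad : List ℕ → Prop) : List ℕ → List ℕ → List ℕ → List ℕ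
  | [], stack, out => out ++ stack
  | a :: rest, stack, out =>
    if bad (a :: stack) then
      match stack with
      | [] => stackAux bad rest [a] out
      | b :: s => stackAux bad (a :: rest) s (out ++ [b])
    else stackAux bad rest (a :: stack) out
  termination_by i s _ => 2 * i.length + s.length
  decreasing_by all_goals (first | omega | (simp [List.length_cons]; try omega))

noncomputable def SCgen (bad : List ℕ → Prop) (π : List ℕ) : List ℕ := stackAux bad π [] []

/-- The consecutive-`σ`-avoiding stack-sorting map. -/
noncomputable def SCc (σ : List ℕ) : List ℕ → List ℕ := SCgen (fun l => ContainsC l σ)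

/-- The classical-`σ`-avoiding stack-sorting map. -/
noncomputable def sCl (σ : List ℕ) : List ℕ → List ℕ := SCgen (fun l => ContainsPat l σ)

/-- `π` is (the one-line notation of) a permutation of `{1, …, n}`. -/
def IsPermList (n : ℕ) (π : List ℕ) : Prop := π.Perm ((List.range n).map (· + 1))

/-- Complementation on permutations of `{1, …, n}`. -/
def compl (n : ℕ) (π : List ℕ) : List ℕ := π.map (fun x => n + 1 - x)

/-- The finset of permutations of `{1, …, n}` in one-line notation. -/
def permsFinset (n : ℕ) : Finset (List ℕ) := ((List.range n).map (· + 1)).permutations.toFinset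

/-- The number of preimages of `π` in `S_n` under `f`. -/
noncomputable def preCount (f : List ℕ → List ℕ) (n : ℕ) (π : List ℕ) : ℕ :=
  ((permsFinset n).filter (fun τ => f τ = π)).card

lemma sameRel_getElem {u v : List ℕ} (h : SameRel u v) {i j : ℕ} (hij : i < j)
    (hj : j < u.length) :
    (u[i]'(lt_trans hij hj) < u[j]'hj ↔
      v[i]'(by rw [← h.1]; exact lt_trans hij hj) < v[j]'(by rw [← h.1]; exact hj)) := by
  have := h.2 i j hij hj
  rwa [List.getD_eq_getElem _ _ (lt_trans hij hj), List.getD_eq_getElem _ _ hj,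
    List.getD_eq_getElem _ _ (by rw [← h.1]; exact lt_trans hij hj),
    List.getD_eq_getElem _ _ (by rw [← h.1]; exact hj)] at this

lemma sameRel_of_getElem {u v : List ℕ} (hl : u.length = v.length)
    (h : ∀ (i j : ℕ) (hij : i < j) (hj : j < u.length),
      (u[i]'(lt_trans hij hj) < u[j]'hj ↔
        v[i]'(by rw [← hl]; exact lt_trans hij hj) < v[j]'(by rw [← hl]; exact hj))) :
    SameRel u v := by
  refine ⟨hl, fun i j hij hj => ?_⟩
  rw [List.getD_eq_getElem _ _ (lt_trans hij hj), List.getD_eq_getElem _ _ hj,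
    List.getD_eq_getElem _ _ (by rw [← hl]; exact lt_trans hij hj),
    List.getD_eq_getElem _ _ (by rw [← hl]; exact hj)]
  exact h i j hij hj

/-- flipped comparison, needs nodup on both sides -/

lemma sameRel_getElem' {u v : List ℕ} (h : SameRel u v) (hu : u.Nodup) (hv : v.Nodup)
    {i j : ℕ} (hij : i < j) (hj : j < u.length) :
    (u[j]'hj < u[i]'(lt_trans hij hj) ↔
      v[j]'(by rw [← h.1]; exact hj) < v[i]'(by rw [← h.1]; exact lt_trans hij hj)) := by
  have h2 := sameRel_getElem h hij hj
  have hune : u[i]'(lt_trans hij hj) ≠ u[j]'hj := by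
    intro he
    exact absurd (List.Nodup.getElem_inj_iff hu |>.1 he) (by omega)
  have hvne : v[i]'(by rw [← h.1]; exact lt_trans hij hj) ≠ v[j]'(by rw [← h.1]; exact hj) := by
    intro he
    exact absurd (List.Nodup.getElem_inj_iff hv |>.1 he) (by omega)
  constructor
  · intro hlt
    rcases lt_trichotomy (v[j]'(by rw [← h.1]; exact hj))
      (v[i]'(by rw [← h.1]; exact lt_trans hij hj)) with h1 | h1 | h1
    · exact h1
    · exact absurd h1.symm hvne
    · exact absurd (h2.2 h1) (by omega)
  · intro hlt
    rcases lt_trichotomy (u[j]'hj) (u[i]'(lt_trans hij hj)) with h1 | h1 | h1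
    · exact h1
    · exact absurd h1.symm hune
    · exact absurd (h2.1 h1) (by omega)

lemma sameRel_reverse {u v : List ℕ} (h : SameRel u v) (hu : u.Nodup) (hv : v.Nodup) :
    SameRel u.reverse v.reverse := by
  have hl := h.1
  refine sameRel_of_getElem (by simp [hl]) ?_
  intro i j hij hj
  simp only [List.length_reverse] at hj
  rw [List.getElem_reverse, List.getElem_reverse, List.getElem_reverse, List.getElem_reverse]
  have h1 : u.length - 1 - j < u.length - 1 - i := by omega
  have h2 := sameRel_getElem' h hu hv h1 (by omega)
  simp only [show v.length = u.length from hl.symm]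
  exact h2

lemma sameRel_sublist {u w : List ℕ} (h : SameRel u w) {v : List ℕ} (hv : v <+ w) :
    ∃ v', v' <+ u ∧ SameRel v' v := by
  obtain ⟨is, hveq, hp⟩ := List.sublist_eq_map_getElem hv
  have hlen : u.length = w.length := h.1
  refine ⟨(is.map (Fin.cast hlen.symm)).map (fun x => u[x]), List.map_getElem_sublist ?_, ?_⟩
  · rw [List.pairwise_map]
    exact hp.imp (fun h => h)
  · rw [List.map_map]
    refine sameRel_of_getElem (by simp [hveq]) ?_
    intro i j hij hj
    simp only [List.length_map] at hj
    have hij' : (is[i]'(lt_trans hij hj) : ℕ) < (is[j]'hj : ℕ) :=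
      List.pairwise_iff_getElem.1 hp i j (lt_trans hij hj) hj hij
    subst hveq
    simp only [List.getElem_map, Function.comp_apply, Fin.coe_cast]
    exact sameRel_getElem h hij' (by rw [hlen]; exact (is[j]'hj).2)

lemma sameRel_trans {u v w : List ℕ} (h1 : SameRel u v) (h2 : SameRel v w) : SameRel u w := by
  refine ⟨h1.1.trans h2.1, fun i j hij hj => ?_⟩
  exact (h1.2 i j hij hj).trans (h2.2 i j hij (by rw [← h1.1]; exact hj))

lemma containsPat_trans {l m p : List ℕ} (h1 : ContainsPat l m) (h2 : ContainsPat m p) :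
    ContainsPat l p := by
  obtain ⟨u, hu, hum⟩ := h1
  obtain ⟨v, hv, hvp⟩ := h2
  obtain ⟨v', hv', hrel⟩ := sameRel_sublist hum hv
  exact ⟨v', hv'.trans hu, sameRel_trans hrel hvp⟩

lemma sameRel_swap {x y p q : ℕ} {t r : List ℕ} (h : SameRel (x::y::t) (p::q::r))
    (hxy : x ≠ y) (hpq : p ≠ q) : SameRel (y::x::t) (q::p::r) := by
  have hl : (x::y::t).length = (p::q::r).length := h.1
  simp only [List.length_cons] at hl
  refine sameRel_of_getElem (by simp only [List.length_cons]; omega) ?_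
  intro i j hij hj
  simp only [List.length_cons] at hj
  match i, j with
  | 0, 1 =>
    simp only [List.getElem_cons_zero, List.getElem_cons_succ]
    have h01 := sameRel_getElem h (show (0:ℕ) < 1 by omega)
      (show 1 < (x::y::t).length by simp)
    simp only [List.getElem_cons_zero, List.getElem_cons_succ] at h01
    constructor
    · intro hlt
      rcases lt_trichotomy q p with h1 | h1 | h1
      · exact h1
      · exact absurd h1.symm hpq
      · exact absurd (h01.2 h1) (by omega)
    · intro hlt
      rcases lt_trichotomy y x with h1 | h1 | h1
      · exact h1
      · exact absurd h1.symm hxy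
      · exact absurd (h01.1 h1) (by omega)
  | 0, (j'+2) =>
    simp only [List.getElem_cons_zero, List.getElem_cons_succ]
    have := sameRel_getElem h (show 1 < j'+2 by omega)
      (show j'+2 < (x::y::t).length by simp; omega)
    simpa using this
  | 1, (j'+2) =>
    simp only [List.getElem_cons_succ, List.getElem_cons_zero]
    have := sameRel_getElem h (show 0 < j'+2 by omega)
      (show j'+2 < (x::y::t).length by simp; omega)
    simpa using this
  | (i'+2), (j'+2) =>
    simp only [List.getElem_cons_succ]
    have := sameRel_getElem h (show i'+2 < j'+2 by omega)
      (show j'+2 < (x::y::t).length by simp; omega)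
    simpa using this

lemma containsPat_rev {l p : List ℕ} (hl : l.Nodup) (hp : p.Nodup) (h : ContainsPat l p) :
    ContainsPat l.reverse p.reverse := by
  obtain ⟨u, hu, hup⟩ := h
  exact ⟨u.reverse, List.reverse_sublist.2 hu, sameRel_reverse hup (hu.nodup hl) hp⟩

lemma containsC_rev {l p : List ℕ} (hl : l.Nodup) (hp : p.Nodup) (h : ContainsC l p) :
    ContainsC l.reverse p.reverse := by
  obtain ⟨u, hu, hup⟩ := h
  exact ⟨u.reverse, List.reverse_infix.2 hu, sameRel_reverse hup (hu.sublist.nodup hl) hp⟩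

lemma stackAux_nil (bad : List ℕ → Prop) (s o : List ℕ) : stackAux bad [] s o = o ++ s := by
  rw [stackAux.eq_def]

lemma stackAux_push (bad : List ℕ → Prop) (a : ℕ) (rest s o : List ℕ)
    (h : ¬ bad (a :: s)) : stackAux bad (a::rest) s o = stackAux bad rest (a::s) o := by
  rw [stackAux.eq_def]
  simp [h]

lemma stackAux_pop (bad : List ℕ → Prop) (a b : ℕ) (rest s o : List ℕ)
    (h : bad (a :: b :: s)) :
    stackAux bad (a::rest) (b::s) o = stackAux bad (a::rest) s (o ++ [b]) := by
  rw [stackAux.eq_def]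
  simp [h]

lemma stackAux_empty (bad : List ℕ → Prop) (a : ℕ) (rest o : List ℕ)
    (h : bad [a]) : stackAux bad (a::rest) [] o = stackAux bad rest [a] o := by
  rw [stackAux.eq_def]
  simp [h]

lemma stackAux_nopop (bad : List ℕ → Prop) :
    ∀ (input stack out : List ℕ),
      (∀ p, p <+: input → ¬ bad (p.reverse ++ stack)) →
      stackAux bad input stack out = out ++ input.reverse ++ stack := by
  intro input
  induction input with
  | nil => intro stack out _; simp [stackAux_nil]
  | cons a rest ih =>
    intro stack out h
    have hba : ¬ bad (a :: stack) := by
      have := h [a] ⟨rest, rfl⟩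
      simpa using this
    rw [stackAux_push _ _ _ _ _ hba]
    rw [ih (a::stack) out ?_]
    · simp
    · intro p hp hbad
      have : (a :: p) <+: (a :: rest) := by
        rw [List.cons_prefix_cons]
        exact ⟨rfl, hp⟩
      refine h (a::p) this ?_
      simpa using hbad

lemma containsC_length {l σ : List ℕ} (h : ContainsC l σ) : σ.length ≤ l.length := by
  obtain ⟨u, hinf, hrel⟩ := h
  have h1 := hinf.sublist.length_le
  have h2 := hrel.1
  omega

lemma dichotomy (k : ℕ) (hk : 3 ≤ k) (aσ bσ : ℕ) (restσ σ : List ℕ)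
    (hσdef : σ = aσ :: bσ :: restσ) (hσlen : σ.length = k) (hσne : aσ ≠ bσ) :
    ∀ (N : ℕ) (input stack out : List ℕ), 2 * input.length + stack.length ≤ N →
      (input ++ stack).Nodup → ¬ ContainsC stack σ →
      (stackAux (fun l => ContainsC l σ) input stack out = out ++ input.reverse ++ stack ∧
        ∀ p, p <+: input → ¬ ContainsC (p.reverse ++ stack) σ)
      ∨ ContainsPat (stackAux (fun l => ContainsC l σ) input stack out) (bσ :: aσ :: restσ) := by
  intro N
  induction N with
  | zero =>
    intro input stack out hN _ hstack
    have h1 : input = [] := by cases input <;> simp_all <;> omega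
    subst h1
    refine Or.inl ⟨by simp [stackAux_nil], ?_⟩
    intro p hp
    rw [List.prefix_nil.1 hp]
    simpa using hstack
  | succ N ih =>
    intro input stack out hN hnodup hstack
    match input with
    | [] =>
      refine Or.inl ⟨by simp [stackAux_nil], ?_⟩
      intro p hp
      rw [List.prefix_nil.1 hp]
      simpa using hstack
    | a :: rest =>
      by_cases hb : ContainsC (a :: stack) σ
      · match stack with
        | [] =>
          exfalso
          have := containsC_length hb
          simp [hσlen] at this
          omega
        | b :: s =>
          rw [stackAux_pop (fun l => ContainsC l σ) a b rest s out hb]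
          -- extract the occurrence as a prefix
          obtain ⟨u, ⟨l1, l2, hinf⟩, hrel⟩ := hb
          have hulen : u.length = k := by rw [hrel.1, hσlen]
          have hl1 : l1 = [] := by
            match l1 with
            | [] => rfl
            | x :: l1' =>
              exfalso
              refine hstack ⟨u, ⟨l1', l2, ?_⟩, hrel⟩
              have := hinf
              simp only [List.cons_append] at this
              exact (List.cons.injEq _ _ _ _ ▸ this).2
          subst hl1
          simp only [List.nil_append] at hinf
          obtain ⟨m, hm⟩ : ∃ m, k = m + 3 := ⟨k - 3, by omega⟩
          have hslen : m + 1 ≤ s.length := by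
            have : u.length ≤ (a :: b :: s).length := by
              rw [← hinf]; simp
            simp at this
            omega
          have hu : u = a :: b :: s.take (m + 1) := by
            have h1 : u = (a :: b :: s).take k := by
              rw [← hinf, ← hulen, List.take_left]
            rw [h1, hm]
            simp [List.take_cons]
          -- the recursive call
          have hnodup' : ((a :: rest) ++ s).Nodup := by
            refine List.Nodup.sublist ?_ hnodup
            refine List.Sublist.append (List.Sublist.refl _) (List.sublist_cons_self _ _)
          have hstack' : ¬ ContainsC s σ := by
            intro ⟨v, hv, hvrel⟩
            exact hstack ⟨v, hv.trans (List.suffix_cons b s).isInfix, hvrel⟩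
          have hrec := ih (a :: rest) s (out ++ [b]) (by simp at hN ⊢; omega) hnodup' hstack'
          rcases hrec with ⟨heq, hpre⟩ | hcont
          · -- no more pops: b was the last pop, a is pushed right after
            right
            rw [heq]
            have ha_ne_b : a ≠ b := by
              intro h
              subst h
              simp at hnodup
            have hw : SameRel (a :: b :: s.take (m+1)) (aσ :: bσ :: restσ) := by
              rw [← hu, ← hσdef]; exact hrel
            have hswap : SameRel (b :: a :: s.take (m+1)) (bσ :: aσ :: restσ) :=
              sameRel_swap hw ha_ne_b hσne
            refine ⟨b :: a :: s.take (m+1), ?_, hswap⟩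
            have h1 : a :: s.take (m+1) <+ a :: s := (s.take_sublist _).cons₂ a
            have h2 : a :: s.take (m+1) <+ rest.reverse ++ (a :: s) :=
              h1.trans (List.sublist_append_right _ _)
            have h3 : b :: a :: s.take (m+1) <+ b :: (rest.reverse ++ (a :: s)) := h2.cons₂ b
            have h4 : b :: a :: s.take (m+1) <+ out ++ (b :: (rest.reverse ++ (a :: s))) :=
              h3.trans (List.sublist_append_right _ _)
            have : (out ++ [b]) ++ (a :: rest).reverse ++ s
                = out ++ (b :: (rest.reverse ++ (a :: s))) := by
              simp
            rw [this]
            exact h4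
          · right
            exact hcont
      · rw [stackAux_push (fun l => ContainsC l σ) a rest stack out hb]
        have hnodup' : (rest ++ (a :: stack)).Nodup := by
          rw [List.nodup_middle]
          simpa using hnodup
        have hrec := ih rest (a :: stack) out (by simp at hN ⊢; omega) hnodup' hb
        rcases hrec with ⟨heq, hpre⟩ | hcont
        · left
          constructor
          · rw [heq]; simp
          · intro p hp
            match p, hp with
            | [], _ => simpa using hstack
            | x :: p', hp =>
              rw [List.cons_prefix_cons] at hp
              obtain ⟨rfl, hp'⟩ := hp
              have := hpre p' hp'
              simpa using this
        · right
          exact hcont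

/-- If σ ∈ S_k (k ≥ 3) and σ̂ contains 231 classically, then
Sort(SC_σ) = Av(132, rev(σ)-consecutive). -/
theorem sort_sc_eq_av (k : ℕ) (hk : 3 ≤ k) (a b : ℕ) (rest : List ℕ) (σ : List ℕ)
    (hσdef : σ = a :: b :: rest) (hσ : IsPermList k σ)
    (hhat : ContainsPat (b :: a :: rest) [2, 3, 1])
    (n : ℕ) (π : List ℕ) (hπ : IsPermList n π) :
    AvoidsPat (SCc σ π) [2, 3, 1] ↔ (AvoidsPat π [1, 3, 2] ∧ AvoidsC π σ.reverse) := by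
  have hσlen : σ.length = k := by
    have := hσ.length_eq; simpa using this
  have hσnodup : σ.Nodup := by
    refine hσ.nodup_iff.2 (List.Nodup.map (fun x y h => by omega) List.nodup_range)
  have hπnodup : π.Nodup := by
    refine hπ.nodup_iff.2 (List.Nodup.map (fun x y h => by omega) List.nodup_range)
  have hab : a ≠ b := by
    rw [hσdef] at hσnodup
    simp only [List.nodup_cons, List.mem_cons] at hσnodup
    intro h; exact hσnodup.1 (Or.inl h)
  have hSCc : SCc σ π = stackAux (fun l => ContainsC l σ) π [] [] := rfl
  have hkey : AvoidsC π σ.reverse → SCc σ π = π.reverse := by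
    intro hC
    rw [hSCc, stackAux_nopop]
    · simp
    · intro p hp hcon
      rw [List.append_nil] at hcon
      refine hC ?_
      have h2 := containsC_rev ((List.nodup_reverse).2 (hp.sublist.nodup hπnodup)) hσnodup hcon
      rw [List.reverse_reverse] at h2
      obtain ⟨v, hv, hvrel⟩ := h2
      exact ⟨v, hv.trans hp.isInfix, hvrel⟩
  constructor
  · intro hAv
    have hC : AvoidsC π σ.reverse := by
      intro hcon
      rcases dichotomy k hk a b rest σ hσdef hσlen hab (2 * π.length) π [] []
        (by simp) (by simpa using hπnodup)
        (by intro h; have := containsC_length h; simp [hσlen] at this; omega)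
        with ⟨heq, hpre⟩ | hcont
      · obtain ⟨w, ⟨l1, l2, hwinf⟩, hwrel⟩ := hcon
        have hwnodup : w.Nodup := (show w <+ π from (show w <:+: π from ⟨l1, l2, hwinf⟩).sublist).nodup hπnodup
        have hprefix : (l1 ++ w) <+: π := ⟨l2, by simp [← hwinf]⟩
        refine hpre (l1 ++ w) hprefix ?_
        rw [List.append_nil]
        refine ⟨w.reverse, ?_, ?_⟩
        · rw [List.reverse_append]
          exact (List.prefix_append _ _).isInfix
        · have := sameRel_reverse hwrel hwnodup ((List.nodup_reverse).2 hσnodup)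
          rwa [List.reverse_reverse] at this
      · exact hAv (containsPat_trans hcont hhat)
    refine ⟨?_, hC⟩
    intro h132
    refine hAv ?_
    rw [hkey hC]
    have := containsPat_rev hπnodup (by decide) h132
    simpa using this
  · rintro ⟨h132, hC⟩
    intro hcon
    rw [hkey hC] at hcon
    refine h132 ?_
    have := containsPat_rev ((List.nodup_reverse).2 hπnodup) (by decide) hcon
    rw [List.reverse_reverse] at this
    simpa using this
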